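/- Let dμ(ζ) = 2|ζ₁|² dσ(ζ) on ∂B². Then the moment kernel K(α,β) = ∫ ζ^α conj(ζ)^β dμ is diagonal (K(α,β) = 0 for α ≠ β), all Verblunsky coefficients γ_{0,α} of μ vanish, and hence Π_{α∈ℕ₀²}(1-|γ_{0,α}|²) = 1 ≠ 2/e = exp(∫_{∂B²} log(2|ζ₁|²) dσ(ζ)). Thus the Szegő–Verblunsky identity fails for this measure. -/

import Mathlib

open MeasureTheory Filter

noncomputable section

/-- The length (weight) of a multi-index. -/
def mwt {d : ℕ} (α : Fin d →₀ ℕ) : ℕ := ∑ j, α j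

/-- Strict short lexicographic (shortlex) order on multi-indices, with ties broken so that
`e₁ ≺ e₂ ≺ ⋯ ≺ e_d` (at the first index where they differ, the larger entry comes first). -/
def slexLT {d : ℕ} (α β : Fin d →₀ ℕ) : Prop :=
  mwt α < mwt β ∨ (mwt α = mwt β ∧ ∃ i, (∀ j, j < i → α j = β j) ∧ β i < α i)

/-- Non-strict shortlex order. -/
def slexLE {d : ℕ} (α β : Fin d →₀ ℕ) : Prop := α = β ∨ slexLT α β

open Finset
open scoped NNReal ENNReal
set_option linter.unusedSectionVars false

namespace Stmt19Aux

def mono (a b c d : ℕ) (ζ : Fin 2 → ℂ) : ℂ :=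
  (ζ 0)^a * (starRingEnd ℂ) (ζ 0) ^ b * (ζ 1)^c * (starRingEnd ℂ) (ζ 1) ^ d

lemma continuous_mono (a b c d : ℕ) : Continuous (mono a b c d) := by
  unfold mono
  exact ((((continuous_apply 0).pow a).mul ((Complex.continuous_conj.comp (continuous_apply 0)).pow b)).mul ((continuous_apply 1).pow c)).mul ((Complex.continuous_conj.comp (continuous_apply 1)).pow d)

variable {σ' : Measure (Fin 2 → ℂ)} [IsProbabilityMeasure σ']

lemma ae_bd (hsph : ∀ᵐ ζ ∂σ', ∑ j, ‖ζ j‖ ^ 2 = 1) :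
    ∀ᵐ ζ ∂σ', ‖ζ 0‖ ≤ 1 ∧ ‖ζ 1‖ ≤ 1 := by
  filter_upwards [hsph] with ζ h
  rw [Fin.sum_univ_two] at h
  constructor <;> nlinarith [norm_nonneg (ζ 0), norm_nonneg (ζ 1), sq_nonneg (‖ζ 0‖), sq_nonneg (‖ζ 1‖)]

lemma norm_mono_le {a b c d : ℕ} {ζ : Fin 2 → ℂ} (h0 : ‖ζ 0‖ ≤ 1) (h1 : ‖ζ 1‖ ≤ 1) :
    ‖mono a b c d ζ‖ ≤ 1 := by
  have hc0 : ‖(starRingEnd ℂ) (ζ 0)‖ ≤ 1 := by rwa [RCLike.norm_conj]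
  have hc1 : ‖(starRingEnd ℂ) (ζ 1)‖ ≤ 1 := by rwa [RCLike.norm_conj]
  unfold mono
  calc ‖(ζ 0)^a * (starRingEnd ℂ) (ζ 0) ^ b * (ζ 1)^c * (starRingEnd ℂ) (ζ 1) ^ d‖
      = ‖ζ 0‖^a * ‖(starRingEnd ℂ) (ζ 0)‖^b * ‖ζ 1‖^c * ‖(starRingEnd ℂ) (ζ 1)‖^d := by
        simp [norm_mul, norm_pow]
    _ ≤ 1 * 1 * 1 * 1 := by
        gcongr <;> first
          | exact pow_le_one₀ (norm_nonneg _) ‹_›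
          | exact norm_nonneg _ | positivity
    _ = 1 := by ring

lemma integrable_mono (hsph : ∀ᵐ ζ ∂σ', ∑ j, ‖ζ j‖ ^ 2 = 1) (a b c d : ℕ) :
    Integrable (mono a b c d) σ' := by
  refine Integrable.mono' (integrable_const 1) ((continuous_mono a b c d).aestronglyMeasurable) ?_
  filter_upwards [ae_bd hsph] with ζ ⟨h0, h1⟩
  exact norm_mono_le h0 h1

lemma measurable_mulVec (U : Matrix (Fin 2) (Fin 2) ℂ) :
    Measurable (fun ζ : Fin 2 → ℂ => Matrix.mulVec U ζ) := by
  apply measurable_pi_lambda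
  intro j
  simpa [Matrix.mulVec, dotProduct] using
    Finset.measurable_sum (f := fun k (ζ : Fin 2 → ℂ) => U j k * ζ k) Finset.univ (fun k _ => by fun_prop)

lemma rot_int (hrot : ∀ U : Matrix.unitaryGroup (Fin 2) ℂ,
      Measure.map (fun ζ => Matrix.mulVec (U : Matrix (Fin 2) (Fin 2) ℂ) ζ) σ' = σ')
    (U : Matrix.unitaryGroup (Fin 2) ℂ) {f : (Fin 2 → ℂ) → ℂ} (hf : AEStronglyMeasurable f σ') :
    ∫ ζ, f (Matrix.mulVec (U : Matrix (Fin 2) (Fin 2) ℂ) ζ) ∂σ' = ∫ ζ, f ζ ∂σ' := by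
  conv_rhs => rw [← hrot U]
  rw [integral_map (measurable_mulVec _).aemeasurable]
  rwa [hrot U]

lemma mem_diag_unitary {u v : ℂ} (hu : ‖u‖ = 1) (hv : ‖v‖ = 1) :
    Matrix.diagonal ![u, v] ∈ Matrix.unitaryGroup (Fin 2) ℂ := by
  have h : ∀ z : ℂ, ‖z‖ = 1 → z * star z = 1 := by
    intro z hz
    rw [Complex.star_def, Complex.mul_conj]
    norm_cast
    simp [Complex.normSq_eq_norm_sq, hz]
  have hw : (![u, v] * star ![u, v]) = 1 := by
    funext i
    fin_cases i
    · simpa using h u hu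
    · simpa using h v hv
  rw [Matrix.mem_unitaryGroup_iff, Matrix.star_eq_conjTranspose, Matrix.diagonal_conjTranspose,
    Matrix.diagonal_mul_diagonal]
  have : (fun i => ![u, v] i * star ![u, v] i) = ![u, v] * star ![u, v] := rfl
  rw [this, hw]; ext i j; simp [Matrix.diagonal_apply, Matrix.one_apply]

lemma diag_mulVec (u v : ℂ) (ζ : Fin 2 → ℂ) :
    Matrix.mulVec (Matrix.diagonal ![u, v]) ζ = ![u * ζ 0, v * ζ 1] := by
  funext i
  fin_cases i <;> simp [Matrix.mulVec_diagonal]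

lemma exp_unit_pow (a b : ℕ) (hab : a ≠ b) :
    ∃ u : ℂ, ‖u‖ = 1 ∧ u ^ a * (starRingEnd ℂ) u ^ b = -1 := by
  set θ : ℝ := Real.pi / ((a : ℝ) - b)
  refine ⟨Complex.exp (θ * Complex.I), by simpa using Complex.abs_exp_ofReal_mul_I θ, ?_⟩
  have h1 : (starRingEnd ℂ) (Complex.exp (θ * Complex.I)) = Complex.exp (-(θ * Complex.I)) := by
    rw [← Complex.exp_conj]
    congr 1
    simp [Complex.conj_ofReal]
  rw [h1, ← Complex.exp_nat_mul, ← Complex.exp_nat_mul, ← Complex.exp_add]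
  have hab' : (a : ℝ) - b ≠ 0 := by
    intro h
    exact hab (by exact_mod_cast sub_eq_zero.mp h)
  have : (a : ℂ) * (θ * Complex.I) + (b : ℂ) * -(θ * Complex.I) = Real.pi * Complex.I := by
    have : ((a : ℂ) - b) * θ = Real.pi := by
      have : ((a : ℝ) - b) * θ = Real.pi := by
        show ((a:ℝ) - b) * (Real.pi / ((a:ℝ) - b)) = Real.pi
        field_simp
      calc ((a : ℂ) - b) * θ = (((a : ℝ) - b) * θ : ℝ) := by push_cast; ring
        _ = Real.pi := by rw [this]
    calc (a : ℂ) * (θ * Complex.I) + (b : ℂ) * -(θ * Complex.I)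
        = ((a : ℂ) - b) * θ * Complex.I := by ring
      _ = Real.pi * Complex.I := by rw [this]
  rw [this, Complex.exp_pi_mul_I]


lemma mono_orth
    (hrot : ∀ U : Matrix.unitaryGroup (Fin 2) ℂ,
      Measure.map (fun ζ => Matrix.mulVec (U : Matrix (Fin 2) (Fin 2) ℂ) ζ) σ' = σ')
    {a b c d : ℕ} (h : a ≠ b ∨ c ≠ d) :
    ∫ ζ, mono a b c d ζ ∂σ' = 0 := by
  have main : ∀ (U : Matrix.unitaryGroup (Fin 2) ℂ) (cst : ℂ), cst = -1 →
      (∀ ζ : Fin 2 → ℂ, mono a b c d (Matrix.mulVec (U : Matrix (Fin 2) (Fin 2) ℂ) ζ)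
        = cst * mono a b c d ζ) → ∫ ζ, mono a b c d ζ ∂σ' = 0 := by
    intro U cst hcst hpt
    have h1 := rot_int hrot U (f := mono a b c d) (continuous_mono a b c d).aestronglyMeasurable
    rw [show (fun ζ => mono a b c d (Matrix.mulVec (U : Matrix (Fin 2) (Fin 2) ℂ) ζ))
        = fun ζ => cst * mono a b c d ζ from funext hpt] at h1
    rw [integral_const_mul] at h1
    subst hcst
    have h2 : (∫ ζ, mono a b c d ζ ∂σ') + ∫ ζ, mono a b c d ζ ∂σ' = 0 := by
      nth_rewrite 1 [← h1]; ring
    exact add_self_eq_zero.mp h2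
  rcases h with h | h
  · obtain ⟨u, hu, hval⟩ := exp_unit_pow a b h
    refine main ⟨Matrix.diagonal ![u, 1], mem_diag_unitary hu norm_one⟩
      (u ^ a * (starRingEnd ℂ) u ^ b) hval ?_
    intro ζ
    show mono a b c d (Matrix.mulVec (Matrix.diagonal ![u, 1]) ζ) = _
    rw [diag_mulVec]
    simp only [mono, Matrix.cons_val_zero, Matrix.cons_val_one, Matrix.head_cons, map_mul,
      mul_pow, one_mul, map_one, one_pow]
    ring
  · obtain ⟨u, hu, hval⟩ := exp_unit_pow c d h
    refine main ⟨Matrix.diagonal ![1, u], mem_diag_unitary norm_one hu⟩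
      (u ^ c * (starRingEnd ℂ) u ^ d) hval ?_
    intro ζ
    show mono a b c d (Matrix.mulVec (Matrix.diagonal ![1, u]) ζ) = _
    rw [diag_mulVec]
    simp only [mono, Matrix.cons_val_zero, Matrix.cons_val_one, Matrix.head_cons, map_mul,
      mul_pow, one_mul, map_one, one_pow]
    ring

def Sval (p q : ℕ) : ℝ := (p.factorial * q.factorial : ℝ) / ((p + q + 1).factorial : ℝ)

lemma Sval_pos (p q : ℕ) : 0 < Sval p q := by
  unfold Sval
  have h1 : (0:ℝ) < (p.factorial : ℝ) := by exact_mod_cast p.factorial_pos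
  have h2 : (0:ℝ) < (q.factorial : ℝ) := by exact_mod_cast q.factorial_pos
  have h3 : (0:ℝ) < ((p+q+1).factorial : ℝ) := by exact_mod_cast (p+q+1).factorial_pos
  positivity

lemma Sval_rec (p q : ℕ) : Sval p q - Sval (p+1) q = Sval p (q+1) := by
  unfold Sval
  have h1 : p + 1 + q + 1 = p + q + 2 := by omega
  have h2 : p + (q + 1) + 1 = p + q + 2 := by omega
  rw [h1, h2]
  have e1 : ((p+q+2).factorial : ℝ) = (p+q+2) * ((p+q+1).factorial : ℝ) := by
    exact_mod_cast Nat.factorial_succ (p+q+1)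
  have e2 : ((p+1).factorial : ℝ) = (p+1) * (p.factorial : ℝ) := by
    exact_mod_cast Nat.factorial_succ p
  have e3 : ((q+1).factorial : ℝ) = (q+1) * (q.factorial : ℝ) := by
    exact_mod_cast Nat.factorial_succ q
  have h3 : ((p+q+1).factorial : ℝ) ≠ 0 := by
    exact_mod_cast (p+q+1).factorial_pos.ne'
  rw [e1, e2, e3]
  field_simp
  ring

lemma Ssum (q : ℕ) : ∀ p : ℕ,
    ∑ j ∈ range (q+1), (q.choose j : ℝ) * (-1)^j / (p+j+1) = Sval p q := by
  induction q with
  | zero =>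
      intro p
      simp only [zero_add, range_one, sum_singleton, Nat.choose_zero_right, Nat.cast_one,
        pow_zero, Nat.cast_zero, add_zero, one_mul, Sval]
      rw [Nat.factorial_succ]
      have h : (p.factorial : ℝ) ≠ 0 := by exact_mod_cast p.factorial_pos.ne'
      have h2 : (0:ℝ) < (p:ℝ) + 1 := by positivity
      push_cast
      field_simp
      simp
  | succ q ih =>
      intro p
      rw [Finset.sum_range_succ']
      have e0 : ((q+1).choose 0 : ℝ) * (-1)^0 / ((p:ℝ)+(0:ℕ)+1) = 1/(p+1) := by
        push_cast; simp
      rw [e0]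
      have expand : ∑ j ∈ range (q+1), ((q+1).choose (j+1) : ℝ) * (-1)^(j+1) / ((p:ℝ)+((j+1:ℕ):ℝ)+1)
          = (∑ j ∈ range (q+1), (q.choose (j+1) : ℝ) * (-1)^(j+1) / ((p:ℝ)+(j:ℝ)+2))
            + (∑ j ∈ range (q+1), (q.choose j : ℝ) * (-1)^(j+1) / ((p:ℝ)+(j:ℝ)+2)) := by
        rw [← Finset.sum_add_distrib]
        apply Finset.sum_congr rfl
        intro j _
        have pasc : ((q+1).choose (j+1) : ℝ) = (q.choose j : ℝ) + (q.choose (j+1) : ℝ) := by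
          exact_mod_cast Nat.choose_succ_succ q j
        rw [pasc]
        push_cast
        ring
      rw [expand]
      have hA : (∑ j ∈ range (q+1), (q.choose (j+1) : ℝ) * (-1)^(j+1) / ((p:ℝ)+(j:ℝ)+2)) + 1/(p+1)
          = Sval p q := by
        rw [← ih p]
        conv_rhs => rw [Finset.sum_range_succ']
        have hs : ∑ j ∈ range (q+1), (q.choose (j+1) : ℝ) * (-1)^(j+1) / ((p:ℝ)+(j:ℝ)+2)
            = ∑ j ∈ range q, (q.choose (j+1) : ℝ) * (-1)^(j+1) / ((p:ℝ)+(j:ℝ)+2) := by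
          rw [Finset.sum_range_succ]
          have hz : (q.choose (q+1) : ℝ) = 0 := by
            exact_mod_cast Nat.choose_succ_self q
          rw [hz]
          ring
        rw [hs]
        have hs2 : ∑ j ∈ range q, ((q.choose (j+1) : ℝ)) * (-1)^(j+1) / ((p:ℝ)+((j+1:ℕ):ℝ)+1)
            = ∑ j ∈ range q, (q.choose (j+1) : ℝ) * (-1)^(j+1) / ((p:ℝ)+(j:ℝ)+2) := by
          apply Finset.sum_congr rfl
          intro j _
          push_cast
          ring
        rw [hs2]
        simp
      have hB : (∑ j ∈ range (q+1), (q.choose j : ℝ) * (-1)^(j+1) / ((p:ℝ)+(j:ℝ)+2))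
          = - Sval (p+1) q := by
        rw [← ih (p+1)]
        rw [← Finset.sum_neg_distrib]
        apply Finset.sum_congr rfl
        intro j _
        push_cast
        ring
      calc (∑ j ∈ range (q+1), (q.choose (j+1) : ℝ) * (-1)^(j+1) / ((p:ℝ)+(j:ℝ)+2))
            + (∑ j ∈ range (q+1), (q.choose j : ℝ) * (-1)^(j+1) / ((p:ℝ)+(j:ℝ)+2)) + 1/(p+1)
          = ((∑ j ∈ range (q+1), (q.choose (j+1) : ℝ) * (-1)^(j+1) / ((p:ℝ)+(j:ℝ)+2)) + 1/(p+1))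
            + (∑ j ∈ range (q+1), (q.choose j : ℝ) * (-1)^(j+1) / ((p:ℝ)+(j:ℝ)+2)) := by ring
        _ = Sval p q - Sval (p+1) q := by rw [hA, hB]; ring
        _ = Sval p (q+1) := Sval_rec p q

lemma sum_split_even_odd (f : ℕ → ℤ) (m : ℕ) :
    ∑ i ∈ range (2*m), f i = (∑ k ∈ range m, f (2*k)) + ∑ k ∈ range m, f (2*k+1) := by
  induction m with
  | zero => simp
  | succ m ih =>
      have h2 : 2*(m+1) = (2*m) + 1 + 1 := by ring
      rw [h2, Finset.sum_range_succ, Finset.sum_range_succ, Finset.sum_range_succ,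
        Finset.sum_range_succ, ih]
      ring

lemma sum_choose_odd (n : ℕ) :
    ∑ k ∈ range (n+1), (((n+1).choose (2*k+1) : ℤ)) = 2^n := by
  have hext : ∀ (g : ℕ → ℤ), (∀ i, n+2 ≤ i → g i = 0) →
      ∑ i ∈ range (2*(n+1)), g i = ∑ i ∈ range (n+2), g i := by
    intro g hg
    symm
    apply Finset.sum_subset
    · apply Finset.range_subset_range.mpr; omega
    · intro x _ hx
      exact hg x (by simpa using hx)
  have hzero : ∀ i, n+2 ≤ i → ((n+1).choose i : ℤ) = 0 := by
    intro i hi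
    have : (n+1).choose i = 0 := Nat.choose_eq_zero_of_lt (by omega)
    exact_mod_cast this
  have hzero' : ∀ i, n+2 ≤ i → (-1)^i * ((n+1).choose i : ℤ) = 0 := by
    intro i hi; rw [hzero i hi]; ring
  have htot : (∑ k ∈ range (n+1), ((n+1).choose (2*k) : ℤ))
      + ∑ k ∈ range (n+1), ((n+1).choose (2*k+1) : ℤ) = 2^(n+1) := by
    rw [← sum_split_even_odd (fun i => ((n+1).choose i : ℤ)) (n+1),
      hext _ hzero]
    have hh : ∑ i ∈ range (n+2), (n+1).choose i = 2^(n+1) := by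
      simpa using Nat.sum_range_choose (n+1)
    exact_mod_cast congrArg (Nat.cast : ℕ → ℤ) hh
  have halt : (∑ k ∈ range (n+1), ((n+1).choose (2*k) : ℤ))
      - ∑ k ∈ range (n+1), ((n+1).choose (2*k+1) : ℤ) = 0 := by
    have h0 : ∑ i ∈ range (2*(n+1)), (-1:ℤ)^i * ((n+1).choose i) = 0 := by
      rw [hext _ hzero']
      have := Int.alternating_sum_range_choose (n := n+1)
      rw [this]
      simp
    rw [sum_split_even_odd] at h0
    have he : ∑ k ∈ range (n+1), (-1:ℤ)^(2*k) * ((n+1).choose (2*k))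
        = ∑ k ∈ range (n+1), ((n+1).choose (2*k) : ℤ) := by
      apply Finset.sum_congr rfl; intro k _
      simp [pow_mul]
    have ho : ∑ k ∈ range (n+1), (-1:ℤ)^(2*k+1) * ((n+1).choose (2*k+1))
        = - ∑ k ∈ range (n+1), ((n+1).choose (2*k+1) : ℤ) := by
      rw [← Finset.sum_neg_distrib]
      apply Finset.sum_congr rfl; intro k _
      simp [pow_succ, pow_mul]
    rw [he, ho] at h0
    linarith
  have hp : (2:ℤ)^(n+1) = 2*2^n := by ring
  linarith

lemma outer_term (n k : ℕ) :
    ((n.choose k : ℝ) * ((n-k).choose k : ℝ)) * Sval k k = (((n+1).choose (2*k+1) : ℝ)) / (n+1) := by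
  by_cases h2k : 2*k ≤ n
  · have e2' : (n-k).choose k * (k.factorial * (n-2*k).factorial) = (n-k).factorial := by
      have h : n - 2*k = n - k - k := by omega
      rw [h, ← mul_assoc]
      exact Nat.choose_mul_factorial_mul_factorial (by omega)
    have e1 : n.choose k * (k.factorial * (n-k).factorial) = n.factorial := by
      rw [← mul_assoc]
      exact Nat.choose_mul_factorial_mul_factorial (by omega)
    have e3 : (n+1).choose (2*k+1) * ((2*k+1).factorial * (n-2*k).factorial) = (n+1).factorial := by
      have h : n + 1 - (2*k+1) = n - 2*k := by omega
      rw [← h, ← mul_assoc]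
      exact Nat.choose_mul_factorial_mul_factorial (by omega)
    have hnat : (n.choose k * ((n-k).choose k)) * (k.factorial * k.factorial * (n-2*k).factorial) * (n+1)
        = (n+1).choose (2*k+1) * ((2*k+1).factorial * (n-2*k).factorial) := by
      rw [e3]
      calc (n.choose k * ((n-k).choose k)) * (k.factorial * k.factorial * (n-2*k).factorial) * (n+1)
          = (n.choose k * (k.factorial * ((n-k).choose k * (k.factorial * (n-2*k).factorial)))) * (n+1) := by ring
        _ = (n.choose k * (k.factorial * (n-k).factorial)) * (n+1) := by rw [← e2']
        _ = n.factorial * (n+1) := by rw [e1]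
        _ = (n+1).factorial := by rw [Nat.factorial_succ]; ring
    have hr : ((n.choose k : ℝ) * ((n-k).choose k)) * ((k.factorial : ℝ) * k.factorial * (n-2*k).factorial) * ((n:ℝ)+1)
        = ((n+1).choose (2*k+1) : ℝ) * (((2*k+1).factorial : ℝ) * ((n-2*k).factorial : ℝ)) := by
      exact_mod_cast congrArg (Nat.cast : ℕ → ℝ) hnat
    unfold Sval
    have hkk : k + k + 1 = 2*k+1 := by omega
    rw [hkk]
    have d1 : ((2*k+1).factorial : ℝ) ≠ 0 := by exact_mod_cast (2*k+1).factorial_pos.ne'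
    have d2 : ((n:ℝ)+1) ≠ 0 := by positivity
    have d3 : ((n-2*k).factorial : ℝ) ≠ 0 := by exact_mod_cast (n-2*k).factorial_pos.ne'
    rw [← mul_div_assoc, div_eq_div_iff d1 d2]
    apply mul_right_cancel₀ d3
    calc (n.choose k : ℝ) * ((n-k).choose k) * ((k.factorial : ℝ) * (k.factorial : ℝ)) * ((n:ℝ)+1) * ((n-2*k).factorial : ℝ)
        = ((n.choose k : ℝ) * ((n-k).choose k)) * ((k.factorial : ℝ) * k.factorial * (n-2*k).factorial) * ((n:ℝ)+1) := by ring
      _ = ((n+1).choose (2*k+1) : ℝ) * (((2*k+1).factorial : ℝ) * ((n-2*k).factorial : ℝ)) := hr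
      _ = ((n+1).choose (2*k+1) : ℝ) * ((2*k+1).factorial : ℝ) * ((n-2*k).factorial : ℝ) := by ring
  · have c2 : (n-k).choose k = 0 := Nat.choose_eq_zero_of_lt (by omega)
    have c3 : (n+1).choose (2*k+1) = 0 := Nat.choose_eq_zero_of_lt (by omega)
    rw [c2, c3]
    simp


def rr : ℝ := (Real.sqrt 2)⁻¹

lemma rr_mul_self : ((rr : ℝ) : ℂ) * ((rr : ℝ) : ℂ) = 1/2 := by
  have h : Real.sqrt 2 * Real.sqrt 2 = 2 := Real.mul_self_sqrt (by norm_num)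
  have : (rr : ℝ) * rr = 1/2 := by
    unfold rr
    rw [← mul_inv, h]
    norm_num
  calc ((rr : ℝ) : ℂ) * ((rr : ℝ) : ℂ) = (((rr * rr : ℝ)) : ℂ) := by push_cast; ring
    _ = ((1/2 : ℝ) : ℂ) := by rw [this]
    _ = 1/2 := by push_cast; ring

def rmat : Matrix (Fin 2) (Fin 2) ℂ :=
  ![![((rr : ℝ) : ℂ), ((rr : ℝ) : ℂ)], ![-((rr : ℝ) : ℂ), ((rr : ℝ) : ℂ)]]

lemma rmat_mem : rmat ∈ Matrix.unitaryGroup (Fin 2) ℂ := by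
  rw [Matrix.mem_unitaryGroup_iff]
  ext i j
  simp only [Matrix.mul_apply, Matrix.star_apply, Complex.star_def]
  have hc : (starRingEnd ℂ) ((rr : ℝ) : ℂ) = ((rr : ℝ) : ℂ) := Complex.conj_ofReal rr
  fin_cases i <;> fin_cases j <;>
    simp [rmat, Matrix.mul_apply, Fin.sum_univ_two, Matrix.conjTranspose_apply,
      Matrix.one_apply, hc] <;>
    rw [show ((rr:ℝ):ℂ) * ((rr:ℝ):ℂ) + ((rr:ℝ):ℂ) * ((rr:ℝ):ℂ)
        = 2 * (((rr:ℝ):ℂ) * ((rr:ℝ):ℂ)) from by ring, rr_mul_self] <;> norm_num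

lemma rmat_mulVec (ζ : Fin 2 → ℂ) :
    Matrix.mulVec rmat ζ = ![((rr : ℝ) : ℂ) * ζ 0 + ((rr : ℝ) : ℂ) * ζ 1,
      -((rr : ℝ) : ℂ) * ζ 0 + ((rr : ℝ) : ℂ) * ζ 1] := by
  funext i
  fin_cases i <;> simp [rmat, Matrix.mulVec, dotProduct, Fin.sum_univ_two]


variable {σ' : Measure (Fin 2 → ℂ)} [IsProbabilityMeasure σ']

lemma ae_one (hsph : ∀ᵐ ζ ∂σ', ∑ j, ‖ζ j‖ ^ 2 = 1) :
    ∀ᵐ ζ ∂σ', ζ 0 * (starRingEnd ℂ) (ζ 0) + ζ 1 * (starRingEnd ℂ) (ζ 1) = 1 := by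
  filter_upwards [hsph] with ζ h
  rw [Fin.sum_univ_two] at h
  rw [Complex.mul_conj, Complex.mul_conj]
  norm_cast
  rw [Complex.normSq_eq_norm_sq, Complex.normSq_eq_norm_sq]
  exact h

lemma Eq1 (hsph : ∀ᵐ ζ ∂σ', ∑ j, ‖ζ j‖ ^ 2 = 1)
    (hrot : ∀ U : Matrix.unitaryGroup (Fin 2) ℂ,
      Measure.map (fun ζ => Matrix.mulVec (U : Matrix (Fin 2) (Fin 2) ℂ) ζ) σ' = σ') (n : ℕ) :
    (2:ℂ)^n * ∫ ζ, mono n n 0 0 ζ ∂σ'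
      = ∑ k ∈ range (n+1), ((n.choose k : ℂ) * ((n-k).choose k : ℂ)) * ∫ ζ, mono k k k k ζ ∂σ' := by
  have step1 : ∫ ζ, mono n n 0 0 ζ ∂σ'
      = ∫ ζ, mono n n 0 0 (Matrix.mulVec rmat ζ) ∂σ' :=
    (rot_int hrot ⟨rmat, rmat_mem⟩ (continuous_mono n n 0 0).aestronglyMeasurable).symm
  have step2 : ∀ᵐ ζ ∂σ', mono n n 0 0 (Matrix.mulVec rmat ζ)
      = (2:ℂ)⁻¹^n * ∑ k ∈ range (n+1), ∑ l ∈ range (n-k+1),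
          ((n.choose k : ℂ) * ((n-k).choose l : ℂ)) * mono l k k l ζ := by
    filter_upwards [ae_one hsph] with ζ h1
    set w : ℂ := ζ 0 * (starRingEnd ℂ) (ζ 1) with hw
    set cw : ℂ := ζ 1 * (starRingEnd ℂ) (ζ 0) with hcw
    have key : mono n n 0 0 (Matrix.mulVec rmat ζ) = (2:ℂ)⁻¹^n * (1 + w + cw)^n := by
      rw [rmat_mulVec]
      simp only [mono, Matrix.cons_val_zero, Matrix.cons_val_one, Matrix.head_cons,
        pow_zero, mul_one, map_add, map_mul, Complex.conj_ofReal]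
      have expand : (((rr:ℝ):ℂ) * ζ 0 + ((rr:ℝ):ℂ) * ζ 1) ^ n *
          (((rr:ℝ):ℂ) * (starRingEnd ℂ) (ζ 0) + ((rr:ℝ):ℂ) * (starRingEnd ℂ) (ζ 1)) ^ n
          = ((((rr:ℝ):ℂ) * ((rr:ℝ):ℂ)) * ((ζ 0 * (starRingEnd ℂ) (ζ 0) + ζ 1 * (starRingEnd ℂ) (ζ 1)) + w + cw)) ^ n := by
        rw [← mul_pow]
        congr 1
        rw [hw, hcw]
        ring
      rw [expand, h1, rr_mul_self]
      rw [show (1:ℂ)/2 * (1 + w + cw) = 2⁻¹ * (1 + w + cw) from by ring, mul_pow]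
    rw [key]
    congr 1
    have e1 : (1 + w + cw)^n = ∑ k ∈ range (n+1), cw^k * (1+w)^(n-k) * (n.choose k : ℂ) := by
      rw [show (1 + w + cw) = cw + (1+w) from by ring, add_pow]
    rw [e1]
    apply Finset.sum_congr rfl
    intro k _
    have e2 : (1+w)^(n-k) = ∑ l ∈ range (n-k+1), w^l * (1:ℂ)^(n-k-l) * ((n-k).choose l : ℂ) := by
      rw [show (1+w : ℂ) = w+1 from by ring, add_pow]
    rw [e2, Finset.mul_sum, Finset.sum_mul]
    apply Finset.sum_congr rfl
    intro l _
    simp only [mono, hw, hcw, one_pow, mul_one]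
    ring
  have hint : ∀ k ∈ range (n+1), ∀ l ∈ range (n-k+1),
      Integrable (fun ζ => ((n.choose k : ℂ) * ((n-k).choose l : ℂ)) * mono l k k l ζ) σ' :=
    fun k _ l _ => (integrable_mono hsph l k k l).const_mul _
  have step3 : ∫ ζ, mono n n 0 0 ζ ∂σ'
      = (2:ℂ)⁻¹^n * ∑ k ∈ range (n+1), ∑ l ∈ range (n-k+1),
          ((n.choose k : ℂ) * ((n-k).choose l : ℂ)) * ∫ ζ, mono l k k l ζ ∂σ' := by
    rw [step1, integral_congr_ae step2, integral_const_mul]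
    congr 1
    rw [integral_finset_sum _ (fun k hk => integrable_finset_sum _ (hint k hk))]
    apply Finset.sum_congr rfl
    intro k hk
    rw [integral_finset_sum _ (hint k hk)]
    apply Finset.sum_congr rfl
    intro l hl
    exact integral_const_mul _ _
  have step4 : ∀ k ∈ range (n+1),
      ∑ l ∈ range (n-k+1), ((n.choose k : ℂ) * ((n-k).choose l : ℂ)) * ∫ ζ, mono l k k l ζ ∂σ'
        = ((n.choose k : ℂ) * ((n-k).choose k : ℂ)) * ∫ ζ, mono k k k k ζ ∂σ' := by
    intro k _
    apply Finset.sum_eq_single k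
    · intro l _ hlk
      rw [mono_orth hrot (Or.inl hlk), mul_zero]
    · intro hk
      have : (n-k).choose k = 0 := Nat.choose_eq_zero_of_lt (by simp at hk; omega)
      rw [this]
      simp
  rw [step3, Finset.sum_congr rfl step4, ← mul_assoc, show ((2:ℂ)^n * (2:ℂ)⁻¹^n) = 1 from by
    rw [← mul_pow]; norm_num, one_mul]

lemma B_eq (hsph : ∀ᵐ ζ ∂σ', ∑ j, ‖ζ j‖ ^ 2 = 1) (p q : ℕ) :
    ∫ ζ, mono p p q q ζ ∂σ'
      = ∑ j ∈ range (q+1), ((q.choose j : ℂ) * (-1)^j) * ∫ ζ, mono (p+j) (p+j) 0 0 ζ ∂σ' := by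
  have step2 : ∀ᵐ ζ ∂σ', mono p p q q ζ
      = ∑ j ∈ range (q+1), ((q.choose j : ℂ) * (-1)^j) * mono (p+j) (p+j) 0 0 ζ := by
    filter_upwards [ae_one hsph] with ζ h1
    set x : ℂ := ζ 0 * (starRingEnd ℂ) (ζ 0) with hx
    have hy : ζ 1 * (starRingEnd ℂ) (ζ 1) = 1 - x := by
      rw [hx]; linear_combination h1
    have e0 : mono p p q q ζ = x^p * (ζ 1 * (starRingEnd ℂ) (ζ 1))^q := by
      simp only [mono, hx]; ring
    rw [e0, hy, show (1 - x : ℂ) = -x + 1 from by ring, add_pow, Finset.mul_sum]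
    apply Finset.sum_congr rfl
    intro j _
    simp only [mono, hx, one_pow, mul_one, pow_zero]
    ring
  rw [integral_congr_ae step2,
    integral_finset_sum _ (fun j _ => (integrable_mono hsph (p+j) (p+j) 0 0).const_mul _)]
  apply Finset.sum_congr rfl
  intro j _
  exact integral_const_mul _ _

lemma SsumC (p q : ℕ) :
    ∑ j ∈ range (q+1), ((q.choose j : ℂ) * (-1)^j) * (1/((p:ℂ)+(j:ℂ)+1)) = ((Sval p q : ℝ) : ℂ) := by
  have h := Ssum q p
  rw [← h]
  push_cast
  apply Finset.sum_congr rfl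
  intro j _
  ring

lemma S1val (n : ℕ) :
    ∑ k ∈ range (n+1), ((n.choose k : ℂ) * ((n-k).choose k : ℂ)) * ((Sval k k : ℝ) : ℂ)
      = (2:ℂ)^n * (1/((n:ℂ)+1)) := by
  have hreal : ∑ k ∈ range (n+1), ((n.choose k : ℝ) * ((n-k).choose k : ℝ)) * Sval k k
      = (2:ℝ)^n * (1/((n:ℝ)+1)) := by
    rw [Finset.sum_congr rfl (fun k _ => outer_term n k), ← Finset.sum_div]
    have hodd : ∑ k ∈ range (n+1), (((n+1).choose (2*k+1) : ℝ)) = 2^n := by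
      exact_mod_cast sum_choose_odd n
    rw [hodd]
    ring
  have hcast : ∑ k ∈ range (n+1), ((n.choose k : ℂ) * ((n-k).choose k : ℂ)) * ((Sval k k : ℝ) : ℂ)
      = ((∑ k ∈ range (n+1), ((n.choose k : ℝ) * ((n-k).choose k : ℝ)) * Sval k k : ℝ) : ℂ) := by
    push_cast
    rfl
  rw [hcast, hreal]
  push_cast
  ring

lemma Amain (hsph : ∀ᵐ ζ ∂σ', ∑ j, ‖ζ j‖ ^ 2 = 1)
    (hrot : ∀ U : Matrix.unitaryGroup (Fin 2) ℂ,
      Measure.map (fun ζ => Matrix.mulVec (U : Matrix (Fin 2) (Fin 2) ℂ) ζ) σ' = σ') :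
    ∀ n : ℕ, ∫ ζ, mono n n 0 0 ζ ∂σ' = 1/((n:ℂ)+1) := by
  intro n
  induction n using Nat.strong_induction_on with
  | _ n IH =>
  rcases Nat.eq_zero_or_pos n with rfl | hn
  · have h1 : (fun ζ : Fin 2 → ℂ => mono 0 0 0 0 ζ) = fun _ => (1:ℂ) := by
      funext ζ; simp [mono]
    rw [h1]
    simp
  · set X : ℂ := ∫ ζ, mono n n 0 0 ζ ∂σ' with hX
    set T : ℂ := 1/((n:ℂ)+1) with hT
    have key : ∀ k ∈ range (n+1),
        ((n.choose k : ℂ) * ((n-k).choose k : ℂ)) * ∫ ζ, mono k k k k ζ ∂σ'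
          = ((n.choose k : ℂ) * ((n-k).choose k : ℂ)) * ((Sval k k : ℝ) : ℂ)
            + (if n = 2*k then ((-1)^k * (n.choose k : ℂ)) * (X - T) else 0) := by
      intro k hk
      have hkn : k ≤ n := by simp at hk; omega
      rw [B_eq hsph k k]
      have hfull : ∑ j ∈ range (k+1), ((k.choose j : ℂ) * (-1)^j) * (1/(((k+j:ℕ):ℂ)+1))
          = ((Sval k k : ℝ) : ℂ) := by
        rw [← SsumC k k]
        apply Finset.sum_congr rfl
        intro j _
        push_cast
        ring
      by_cases h2k : 2*k ≤ n
      · by_cases hn2 : n = 2*k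
        · have hkk : k + k = n := by omega
          have hsplit : ∑ j ∈ range (k+1), ((k.choose j : ℂ) * (-1)^j) * ∫ ζ, mono (k+j) (k+j) 0 0 ζ ∂σ'
              = (∑ j ∈ range k, ((k.choose j : ℂ) * (-1)^j) * (1/(((k+j:ℕ):ℂ)+1)))
                + ((-1)^k : ℂ) * X := by
            rw [Finset.sum_range_succ]
            congr 1
            · apply Finset.sum_congr rfl
              intro j hj
              rw [IH (k+j) (by simp at hj; omega)]
            · rw [hkk, ← hX, Nat.choose_self]
              push_cast
              ring
          have hsub : ∑ j ∈ range k, ((k.choose j : ℂ) * (-1)^j) * (1/(((k+j:ℕ):ℂ)+1))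
              = ((Sval k k : ℝ) : ℂ) - ((-1)^k : ℂ) * T := by
            have := hfull
            rw [Finset.sum_range_succ] at this
            have hlast : ((k.choose k : ℂ) * (-1)^k) * (1/(((k+k:ℕ):ℂ)+1)) = ((-1)^k : ℂ) * T := by
              rw [hkk, ← hT, Nat.choose_self]
              push_cast
              ring
            rw [hlast] at this
            linear_combination this
          rw [hsplit, hsub, if_pos hn2]
          have hc1 : ((n-k).choose k : ℂ) = 1 := by
            rw [show n - k = k from by omega, Nat.choose_self]
            norm_num
          rw [hc1]
          ring
        · have hlt : 2*k < n := by omega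
          have : ∑ j ∈ range (k+1), ((k.choose j : ℂ) * (-1)^j) * ∫ ζ, mono (k+j) (k+j) 0 0 ζ ∂σ'
              = ∑ j ∈ range (k+1), ((k.choose j : ℂ) * (-1)^j) * (1/(((k+j:ℕ):ℂ)+1)) := by
            apply Finset.sum_congr rfl
            intro j hj
            rw [IH (k+j) (by simp at hj; omega)]
          rw [this, hfull, if_neg hn2]
          ring
      · have hc : ((n-k).choose k : ℂ) = 0 := by
          norm_cast
          exact Nat.choose_eq_zero_of_lt (by omega)
        rw [hc, if_neg (by omega)]
        ring
    have eq1 := Eq1 hsph hrot n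
    rw [Finset.sum_congr rfl key, Finset.sum_add_distrib, S1val n] at eq1
    rcases Nat.even_or_odd n with he | ho
    · obtain ⟨m, hm⟩ := he
      have hsum2 : ∑ k ∈ range (n+1), (if n = 2*k then ((-1)^k * (n.choose k : ℂ)) * (X - T) else 0)
          = ((-1)^m * (n.choose m : ℂ)) * (X - T) := by
        rw [Finset.sum_congr rfl
          (fun k _ => if_congr (show (n = 2*k) ↔ (k = m) from by omega) rfl rfl)]
        rw [Finset.sum_ite_eq' (range (n+1)) m (fun k => ((-1)^k * (n.choose k : ℂ)) * (X - T))]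
        rw [if_pos (by simp; omega)]
      rw [hsum2] at eq1
      have hm1 : 1 ≤ m := by omega
      have hb : n.choose m + 1 ≤ 2^n := by
        have hsm := Nat.sum_range_choose n
        have h0 : n.choose 0 + ∑ i ∈ (range (n+1)).erase 0, n.choose i
            = ∑ i ∈ range (n+1), n.choose i := Finset.add_sum_erase _ _ (by simp)
        have h1 : n.choose m ≤ ∑ i ∈ (range (n+1)).erase 0, n.choose i := by
          apply Finset.single_le_sum (fun i _ => Nat.zero_le _)
          simp only [Finset.mem_erase, Finset.mem_range]
          omega
        simp only [Nat.choose_zero_right] at h0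
        omega
      have hzne : ((2:ℂ)^n - (-1)^m * (n.choose m : ℂ)) ≠ 0 := by
        have hd : ((2:ℤ)^n - (-1)^m * (n.choose m : ℤ)) ≠ 0 := by
          have hci : ((n.choose m : ℤ)) + 1 ≤ 2^n := by exact_mod_cast hb
          have hc0 : (0:ℤ) ≤ (n.choose m : ℤ) := by positivity
          rcases Nat.even_or_odd m with hme | hmo
          · rw [hme.neg_one_pow]
            intro habs
            have : (2:ℤ)^n = (n.choose m : ℤ) := by linarith [sub_eq_zero.mp habs]
            omega
          · rw [hmo.neg_one_pow]
            intro habs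
            have : (2:ℤ)^n = -(n.choose m : ℤ) := by linarith [sub_eq_zero.mp habs]
            have hp : (0:ℤ) < 2^n := by positivity
            omega
        have hcast : ((2:ℂ)^n - (-1)^m * (n.choose m : ℂ))
            = (((2:ℤ)^n - (-1)^m * (n.choose m : ℤ) : ℤ) : ℂ) := by
          push_cast
          ring
        rw [hcast]
        exact_mod_cast hd
      have hfinal : ((2:ℂ)^n - (-1)^m * (n.choose m : ℂ)) * (X - T) = 0 := by
        linear_combination eq1
      have hXT := (mul_eq_zero.mp hfinal).resolve_left hzne
      exact sub_eq_zero.mp hXT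
    · have hsum2 : ∑ k ∈ range (n+1), (if n = 2*k then ((-1)^k * (n.choose k : ℂ)) * (X - T) else 0)
          = 0 := by
        apply Finset.sum_eq_zero
        intro k _
        rw [if_neg]
        obtain ⟨m, hm⟩ := ho
        omega
      rw [hsum2, add_zero] at eq1
      have h2 : (2:ℂ)^n ≠ 0 := pow_ne_zero _ two_ne_zero
      exact mul_left_cancel₀ h2 eq1

lemma Bval (hsph : ∀ᵐ ζ ∂σ', ∑ j, ‖ζ j‖ ^ 2 = 1)
    (hrot : ∀ U : Matrix.unitaryGroup (Fin 2) ℂ,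
      Measure.map (fun ζ => Matrix.mulVec (U : Matrix (Fin 2) (Fin 2) ℂ) ζ) σ' = σ') (p q : ℕ) :
    ∫ ζ, mono p p q q ζ ∂σ' = ((Sval p q : ℝ) : ℂ) := by
  rw [B_eq hsph p q, ← SsumC p q]
  apply Finset.sum_congr rfl
  intro j _
  rw [Amain hsph hrot (p+j)]
  push_cast
  ring

lemma density_integral (g : (Fin 2 → ℂ) → ℂ) :
    ∫ ζ, g ζ ∂(σ'.withDensity fun ζ => ENNReal.ofReal (2 * ‖ζ 0‖ ^ 2))
      = ∫ ζ, ((2 * ‖ζ 0‖ ^ 2 : ℝ) : ℂ) * g ζ ∂σ' := by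
  have hmeas : Measurable (fun ζ : Fin 2 → ℂ => Real.toNNReal (2 * ‖ζ 0‖ ^ 2)) :=
    (((measurable_pi_apply 0).norm.pow measurable_const).const_mul 2).real_toNNReal
  have hden : (fun ζ : Fin 2 → ℂ => ENNReal.ofReal (2 * ‖ζ 0‖ ^ 2))
      = fun ζ => ((Real.toNNReal (2 * ‖ζ 0‖ ^ 2) : ℝ≥0) : ℝ≥0∞) := rfl
  rw [hden, integral_withDensity_eq_integral_smul hmeas]
  apply integral_congr_ae
  filter_upwards with ζ
  have hnn : (0:ℝ) ≤ 2 * ‖ζ 0‖ ^ 2 := by positivity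
  rw [NNReal.smul_def, Real.coe_toNNReal _ hnn, Complex.real_smul]

lemma Kval (hμint : ∀ α β : Fin 2 →₀ ℕ, True) (α β : Fin 2 →₀ ℕ) :
    ∫ ζ, (∏ j, ζ j ^ α j) * (starRingEnd ℂ) (∏ j, ζ j ^ β j)
        ∂(σ'.withDensity fun ζ => ENNReal.ofReal (2 * ‖ζ 0‖ ^ 2))
      = 2 * ∫ ζ, mono (α 0 + 1) (β 0 + 1) (α 1) (β 1) ζ ∂σ' := by
  rw [density_integral]
  rw [← integral_const_mul]
  apply integral_congr_ae
  filter_upwards with ζ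
  have hns : ((‖ζ 0‖ ^ 2 : ℝ) : ℂ) = ζ 0 * (starRingEnd ℂ) (ζ 0) := by
    rw [Complex.mul_conj]
    norm_cast
    rw [Complex.normSq_eq_norm_sq]
  have hprod : ∀ γ : (Fin 2 →₀ ℕ), (∏ j, ζ j ^ γ j) = ζ 0 ^ γ 0 * ζ 1 ^ γ 1 := fun γ =>
    Fin.prod_univ_two _
  have hc2 : ((2 * ‖ζ 0‖ ^ 2 : ℝ) : ℂ) = 2 * ((‖ζ 0‖ ^ 2 : ℝ) : ℂ) := by push_cast; ring
  rw [hc2, hns, hprod α, hprod β]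
  simp only [mono, map_mul, map_pow]
  ring

lemma mreal (hsph : ∀ᵐ ζ ∂σ', ∑ j, ‖ζ j‖ ^ 2 = 1)
    (hrot : ∀ U : Matrix.unitaryGroup (Fin 2) ℂ,
      Measure.map (fun ζ => Matrix.mulVec (U : Matrix (Fin 2) (Fin 2) ℂ) ζ) σ' = σ') (k : ℕ) :
    ∫ ζ, (‖ζ 1‖ ^ 2) ^ k ∂σ' = 1/((k:ℝ)+1) := by
  have h1 : ∫ ζ, mono 0 0 k k ζ ∂σ' = ((Sval 0 k : ℝ) : ℂ) := Bval hsph hrot 0 k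
  have hs : Sval 0 k = 1/((k:ℝ)+1) := by
    unfold Sval
    rw [show (0+k+1) = k+1 from by omega, Nat.factorial_succ]
    have hk : ((k.factorial : ℝ)) ≠ 0 := by exact_mod_cast k.factorial_pos.ne'
    push_cast
    rw [Nat.factorial_zero]
    field_simp
    ring
  have h2 : (fun ζ : Fin 2 → ℂ => mono 0 0 k k ζ)
      = fun ζ => (((‖ζ 1‖ ^ 2) ^ k : ℝ) : ℂ) := by
    funext ζ
    have hns : ((‖ζ 1‖ ^ 2 : ℝ) : ℂ) = ζ 1 * (starRingEnd ℂ) (ζ 1) := by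
      rw [Complex.mul_conj]
      norm_cast
      rw [Complex.normSq_eq_norm_sq]
    simp only [mono, pow_zero, one_mul]
    rw [Complex.ofReal_pow, hns, mul_pow]
  have hgint : Integrable (fun ζ : Fin 2 → ℂ => (‖ζ 1‖ ^ 2) ^ k) σ' := by
    refine Integrable.mono' (integrable_const (1:ℝ))
      (((measurable_pi_apply 1).norm.pow measurable_const).pow measurable_const).aestronglyMeasurable ?_
    filter_upwards [ae_bd hsph] with ζ hb
    have h0 : (0:ℝ) ≤ ‖ζ 1‖ ^ 2 := by positivity
    have h1' : ‖ζ 1‖ ^ 2 ≤ 1 := by nlinarith [hb.2, norm_nonneg (ζ 1)]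
    rw [Real.norm_eq_abs, abs_of_nonneg (by positivity)]
    exact pow_le_one₀ h0 h1'
  have h5 := Complex.ofRealCLM.integral_comp_comm hgint
  simp only [Complex.ofRealCLM_apply] at h5
  rw [h2, hs, h5] at h1
  exact Complex.ofReal_injective h1

lemma zero_set_null (hsph : ∀ᵐ ζ ∂σ', ∑ j, ‖ζ j‖ ^ 2 = 1)
    (hrot : ∀ U : Matrix.unitaryGroup (Fin 2) ℂ,
      Measure.map (fun ζ => Matrix.mulVec (U : Matrix (Fin 2) (Fin 2) ℂ) ζ) σ' = σ') :
    σ' {ζ : Fin 2 → ℂ | ζ 0 = 0} = 0 := by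
  set Z := {ζ : Fin 2 → ℂ | ζ 0 = 0} with hZ
  have hZm : MeasurableSet Z := by
    have hpre : Z = (fun ζ : Fin 2 → ℂ => ζ 0) ⁻¹' {0} := rfl
    rw [hpre]
    exact measurable_pi_apply 0 (measurableSet_singleton (0:ℂ))
  have hgint : ∀ k : ℕ, Integrable (fun ζ : Fin 2 → ℂ => (‖ζ 1‖ ^ 2) ^ k) σ' := by
    intro k
    refine Integrable.mono' (integrable_const (1:ℝ))
      (((measurable_pi_apply 1).norm.pow measurable_const).pow
        measurable_const).aestronglyMeasurable ?_
    filter_upwards [ae_bd hsph] with ζ hb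
    have h1' : ‖ζ 1‖ ^ 2 ≤ 1 := by nlinarith [hb.2, norm_nonneg (ζ 1)]
    rw [Real.norm_eq_abs, abs_of_nonneg (by positivity)]
    exact pow_le_one₀ (by positivity) h1'
  have hle : ∀ k : ℕ, (σ' Z).toReal ≤ 1/((k:ℝ)+1) := by
    intro k
    have hind : ∫ ζ, Z.indicator (fun _ => (1:ℝ)) ζ ∂σ' = (σ' Z).toReal := by
      rw [integral_indicator_const (1:ℝ) hZm]
      simp [measureReal_def]
    rw [← hind, ← mreal hsph hrot k]
    apply integral_mono_ae ((integrable_const (1:ℝ)).indicator hZm) (hgint k)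
    filter_upwards [hsph] with ζ hs
    rw [Fin.sum_univ_two] at hs
    by_cases hz : ζ ∈ Z
    · have h0 : ‖ζ 0‖ = 0 := by rw [norm_eq_zero]; exact hz
      have h1 : ‖ζ 1‖ ^ 2 = 1 := by rw [h0] at hs; simpa using hs
      rw [Set.indicator_of_mem hz, h1, one_pow]
    · rw [Set.indicator_of_notMem hz]
      positivity
  have hfin : σ' Z ≠ ⊤ := measure_ne_top σ' Z
  have h0 : (σ' Z).toReal ≤ 0 := by
    by_contra hpos
    push_neg at hpos
    obtain ⟨k, hk⟩ := exists_nat_one_div_lt hpos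
    exact absurd (hle k) (by push_cast; push_cast at hk; linarith)
  have hnn := ENNReal.toReal_nonneg (a := σ' Z)
  have heq : (σ' Z).toReal = 0 := le_antisymm h0 hnn
  exact ((ENNReal.toReal_eq_zero_iff _).mp heq).resolve_right hfin

lemma tele : HasSum (fun k : ℕ => 1/(((k:ℝ)+1)*((k:ℝ)+2))) 1 := by
  rw [hasSum_iff_tendsto_nat_of_nonneg (fun k => by positivity)]
  have hps : ∀ N : ℕ, ∑ k ∈ range N, 1/(((k:ℝ)+1)*((k:ℝ)+2)) = 1 - 1/((N:ℝ)+1) := by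
    intro N
    induction N with
    | zero => simp
    | succ N ih =>
        rw [Finset.sum_range_succ, ih]
        have h1 : ((N:ℝ)+1) ≠ 0 := by positivity
        have h2 : ((N:ℝ)+2) ≠ 0 := by positivity
        push_cast
        field_simp
        ring
  rw [funext hps]
  have h := tendsto_one_div_add_atTop_nhds_zero_nat (𝕜 := ℝ)
  simpa using tendsto_const_nhds.sub h

lemma log_int (hsph : ∀ᵐ ζ ∂σ', ∑ j, ‖ζ j‖ ^ 2 = 1)
    (hrot : ∀ U : Matrix.unitaryGroup (Fin 2) ℂ,
      Measure.map (fun ζ => Matrix.mulVec (U : Matrix (Fin 2) (Fin 2) ℂ) ζ) σ' = σ') :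
    Integrable (fun ζ : Fin 2 → ℂ => Real.log (‖ζ 0‖ ^ 2)) σ' ∧
      ∫ ζ, Real.log (‖ζ 0‖ ^ 2) ∂σ' = -1 := by
  set t : (Fin 2 → ℂ) → ℝ := fun ζ => ‖ζ 0‖ ^ 2 with ht
  have htm : Measurable t := (measurable_pi_apply 0).norm.pow measurable_const
  have haepos : ∀ᵐ ζ ∂σ', 0 < t ζ ∧ t ζ ≤ 1 := by
    have hz : ∀ᵐ ζ ∂σ', ζ 0 ≠ 0 := by
      rw [ae_iff]
      have hset : {ζ : Fin 2 → ℂ | ¬ ζ 0 ≠ 0} = {ζ : Fin 2 → ℂ | ζ 0 = 0} := by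
        ext ζ; simp
      rw [hset]
      exact zero_set_null hsph hrot
    filter_upwards [hz, ae_bd hsph] with ζ h1 h2
    constructor
    · have hne : ‖ζ 0‖ ≠ 0 := fun h => h1 (norm_eq_zero.mp h)
      have hpos : 0 < ‖ζ 0‖ := lt_of_le_of_ne (norm_nonneg _) (Ne.symm hne)
      positivity
    · show ‖ζ 0‖ ^ 2 ≤ 1
      nlinarith [h2.1, norm_nonneg (ζ 0)]
  set g : ℕ → (Fin 2 → ℂ) → ℝ := fun k ζ => (1 - t ζ)^(k+1) / ((k:ℝ)+1) with hg
  have hgm : ∀ k, Measurable (g k) :=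
    fun k => ((measurable_const.sub htm).pow measurable_const).div_const _
  have hsumae : ∀ᵐ ζ ∂σ', HasSum (fun k => g k ζ) (-Real.log (t ζ)) := by
    filter_upwards [haepos] with ζ hp
    obtain ⟨h0, h1⟩ := hp
    have habs : |1 - t ζ| < 1 := by rw [abs_lt]; constructor <;> linarith
    have hh := Real.hasSum_pow_div_log_of_abs_lt_one habs
    have he : (1 : ℝ) - (1 - t ζ) = t ζ := by ring
    rw [he] at hh
    exact hh
  have hgnn : ∀ᵐ ζ ∂σ', ∀ k, 0 ≤ g k ζ := by
    filter_upwards [haepos] with ζ hp k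
    obtain ⟨h0, h1⟩ := hp
    have : (0:ℝ) ≤ 1 - t ζ := by linarith
    positivity
  have hgint : ∀ k, Integrable (g k) σ' := by
    intro k
    refine Integrable.mono' (integrable_const (1:ℝ)) (hgm k).aestronglyMeasurable ?_
    filter_upwards [haepos] with ζ hp
    obtain ⟨h0, h1⟩ := hp
    have hs : (0:ℝ) ≤ 1 - t ζ := by linarith
    have hs2 : (1 - t ζ)^(k+1) ≤ 1 := pow_le_one₀ hs (by linarith)
    rw [Real.norm_eq_abs, abs_of_nonneg (by positivity)]
    rw [div_le_one (by positivity)]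
    have := Nat.cast_nonneg (α := ℝ) k
    linarith
  have hgval : ∀ k : ℕ, ∫ ζ, g k ζ ∂σ' = 1/(((k:ℝ)+1)*((k:ℝ)+2)) := by
    intro k
    have hcong : ∀ᵐ ζ ∂σ', g k ζ = (‖ζ 1‖^2)^(k+1) / ((k:ℝ)+1) := by
      filter_upwards [hsph] with ζ hs
      rw [Fin.sum_univ_two] at hs
      have he : 1 - t ζ = ‖ζ 1‖^2 := by simp only [ht]; linarith
      simp only [hg]
      rw [he]
    rw [integral_congr_ae hcong, integral_div, mreal hsph hrot (k+1)]
    have h1 : ((k:ℝ)+1) ≠ 0 := by positivity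
    have h2 : ((k:ℝ)+2) ≠ 0 := by positivity
    push_cast
    field_simp
    ring
  have hlt : ∫⁻ ζ, ENNReal.ofReal (-Real.log (t ζ)) ∂σ' = 1 := by
    have hae : ∀ᵐ ζ ∂σ', ENNReal.ofReal (-Real.log (t ζ)) = ∑' k, ENNReal.ofReal (g k ζ) := by
      filter_upwards [hsumae, hgnn] with ζ hh hnn
      rw [← hh.tsum_eq]
      exact ENNReal.ofReal_tsum_of_nonneg hnn hh.summable
    rw [lintegral_congr_ae hae, lintegral_tsum (fun k => ((hgm k).ennreal_ofReal).aemeasurable)]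
    have hk : ∀ k : ℕ, ∫⁻ ζ, ENNReal.ofReal (g k ζ) ∂σ'
        = ENNReal.ofReal (1/(((k:ℝ)+1)*((k:ℝ)+2))) := by
      intro k
      rw [← ofReal_integral_eq_lintegral_ofReal (hgint k)
        (by filter_upwards [hgnn] with ζ h; exact h k), hgval k]
    rw [tsum_congr hk, ← ENNReal.ofReal_tsum_of_nonneg (fun k => by positivity) tele.summable,
      tele.tsum_eq]
    simp
  have hFnn : ∀ᵐ ζ ∂σ', 0 ≤ -Real.log (t ζ) := by
    filter_upwards [haepos] with ζ hp
    obtain ⟨h0, h1⟩ := hp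
    have := Real.log_nonpos (le_of_lt h0) h1
    linarith
  have hFm : Measurable fun ζ => -Real.log (t ζ) := (Real.measurable_log.comp htm).neg
  have hInt : Integrable (fun ζ => -Real.log (t ζ)) σ' := by
    refine ⟨hFm.aestronglyMeasurable, ?_⟩
    rw [hasFiniteIntegral_iff_norm]
    have hnorm : ∫⁻ ζ, ENNReal.ofReal ‖-Real.log (t ζ)‖ ∂σ' = 1 := by
      rw [← hlt]
      apply lintegral_congr_ae
      filter_upwards [hFnn] with ζ h
      rw [Real.norm_eq_abs, abs_of_nonneg h]
    rw [hnorm]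
    exact ENNReal.one_lt_top
  have hval : ∫ ζ, -Real.log (t ζ) ∂σ' = 1 := by
    rw [integral_eq_lintegral_of_nonneg_ae hFnn hFm.aestronglyMeasurable, hlt]
    simp
  rw [integral_neg] at hval
  constructor
  · have hIn := hInt.neg
    have heq : (-fun ζ => -Real.log (t ζ)) = fun ζ : Fin 2 → ℂ => Real.log (‖ζ 0‖ ^ 2) := by
      funext ζ
      simp [ht]
    rwa [heq] at hIn
  · linarith

end Stmt19Aux

open Stmt19Aux

/-- failure of the Szegő–Verblunsky identity on `∂B²`. For the probability
measure `dμ = 2|ζ₁|² dσ` on the unit sphere in `ℂ²`, the moment kernel `K` is diagonal,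
all Verblunsky coefficients `γ_{β,α}` (characterised by the moment-determinant identity
`D_α = K(α,α) · ∏_{β ⪯ prec α}(1-|γ_{β,α}|²) · D_{prec α}` with `|γ_{β,α}| ≤ 1`) vanish,
hence `∏_α (1-|γ_{0,α}|²) = 1`, whereas `exp(∫ log(2|ζ₁|²) dσ) = 2/e ≠ 1`. -/
theorem stmt19 (σ' : Measure (Fin 2 → ℂ)) [IsProbabilityMeasure σ']
    (hsph : ∀ᵐ ζ ∂σ', ∑ j, ‖ζ j‖ ^ 2 = 1)
    (hrot : ∀ U : Matrix.unitaryGroup (Fin 2) ℂ,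
      Measure.map (fun ζ => Matrix.mulVec (U : Matrix (Fin 2) (Fin 2) ℂ) ζ) σ' = σ')
    (μ : Measure (Fin 2 → ℂ))
    (hμ : μ = σ'.withDensity fun ζ => ENNReal.ofReal (2 * ‖ζ 0‖ ^ 2))
    (K : (Fin 2 →₀ ℕ) → (Fin 2 →₀ ℕ) → ℂ)
    (hK : ∀ α β, K α β = ∫ ζ, (∏ j, ζ j ^ α j) * (starRingEnd ℂ) (∏ j, ζ j ^ β j) ∂μ)
    -- shortlex enumeration of the multi-indices
    (e : ℕ ≃ (Fin 2 →₀ ℕ)) (hmono : ∀ n m : ℕ, n < m → slexLT (e n) (e m))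
    -- Verblunsky coefficients `γ i n = γ_{β,α}` for `β, α` in shortlex positions `i, n`
    (γ : ℕ → ℕ → ℂ) (hγbd : ∀ i n, ‖γ i n‖ ≤ 1) (hγ00 : γ 0 0 = 0)
    (hdet : ∀ n : ℕ,
      Matrix.det (Matrix.of fun i j : Fin (n + 2) => K (e (i : ℕ)) (e (j : ℕ)))
        = K (e (n + 1)) (e (n + 1))
          * (((∏ i ∈ Finset.range (n + 1), (1 - ‖γ i (n + 1)‖ ^ 2) : ℝ)) : ℂ)
          * Matrix.det (Matrix.of fun i j : Fin (n + 1) => K (e (i : ℕ)) (e (j : ℕ)))) :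
    (∀ α β, α ≠ β → K α β = 0) ∧
    (∀ n i : ℕ, i ≤ n → γ i (n + 1) = 0) ∧
    Tendsto (fun N : ℕ => ∏ k ∈ Finset.range (N + 1), (1 - ‖γ 0 k‖ ^ 2)) atTop (nhds 1) ∧
    Real.exp (∫ ζ, Real.log (2 * ‖ζ 0‖ ^ 2) ∂σ') = 2 / Real.exp 1 ∧
    (1 : ℝ) ≠ 2 / Real.exp 1 := by
  subst hμ
  have hKval : ∀ α β : Fin 2 →₀ ℕ,
      K α β = 2 * ∫ ζ, mono (α 0 + 1) (β 0 + 1) (α 1) (β 1) ζ ∂σ' := by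
    intro α β
    rw [hK α β]
    exact Kval (fun _ _ => trivial) α β
  -- (1) off-diagonal vanishing
  have hC1 : ∀ α β : Fin 2 →₀ ℕ, α ≠ β → K α β = 0 := by
    intro α β hne
    have hor : α 0 + 1 ≠ β 0 + 1 ∨ α 1 ≠ β 1 := by
      by_contra hcon
      push_neg at hcon
      apply hne
      ext j
      fin_cases j
      · exact (by omega : α 0 = β 0)
      · exact hcon.2
    rw [hKval α β, mono_orth hrot hor, mul_zero]
  -- diagonal values
  have hdiag : ∀ α : Fin 2 →₀ ℕ, K α α = ((2 * Sval (α 0 + 1) (α 1) : ℝ) : ℂ) := by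
    intro α
    rw [hKval α α, Bval hsph hrot (α 0 + 1) (α 1)]
    push_cast
    ring
  have hKne : ∀ m : ℕ, K (e m) (e m) ≠ 0 := by
    intro m
    rw [hdiag]
    have hpos := Sval_pos (e m 0 + 1) (e m 1)
    exact Complex.ofReal_ne_zero.mpr (by positivity)
  -- determinants are products of the diagonal
  have hdet' : ∀ N : ℕ, Matrix.det (Matrix.of fun i j : Fin N => K (e (i : ℕ)) (e (j : ℕ)))
      = ∏ i : Fin N, K (e (i : ℕ)) (e (i : ℕ)) := by
    intro N
    have hmat : (Matrix.of fun i j : Fin N => K (e (i : ℕ)) (e (j : ℕ)))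
        = Matrix.diagonal (fun i : Fin N => K (e (i : ℕ)) (e (i : ℕ))) := by
      ext i j
      by_cases hij : i = j
      · subst hij
        simp [Matrix.diagonal_apply_eq]
      · rw [Matrix.of_apply, Matrix.diagonal_apply_ne _ hij]
        apply hC1
        intro hcon
        exact hij (Fin.val_injective (e.injective hcon))
    rw [hmat, Matrix.det_diagonal]
  -- (2) Verblunsky coefficients vanish
  have hC2 : ∀ n i : ℕ, i ≤ n → γ i (n + 1) = 0 := by
    intro n i hi
    have heq := hdet n
    rw [hdet' (n+2), hdet' (n+1), Fin.prod_univ_castSucc] at heq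
    have hcast : ∀ i : Fin (n+1), ((Fin.castSucc i : Fin (n+2)) : ℕ) = (i : ℕ) := by
      intro i; simp
    have heq2 : (∏ i : Fin (n+1), K (e ((Fin.castSucc i : Fin (n+2)) : ℕ)) (e ((Fin.castSucc i : Fin (n+2)) : ℕ)))
        = ∏ i : Fin (n+1), K (e (i : ℕ)) (e (i : ℕ)) := by
      apply Finset.prod_congr rfl
      intro i _
      rw [hcast i]
    rw [heq2] at heq
    have hlast : ((Fin.last (n+1) : Fin (n+2)) : ℕ) = n + 1 := rfl
    rw [hlast] at heq
    set D : ℂ := ∏ i : Fin (n+1), K (e (i : ℕ)) (e (i : ℕ)) with hD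
    have hDne : D ≠ 0 := Finset.prod_ne_zero_iff.mpr (fun i _ => hKne (i : ℕ))
    set P : ℝ := ∏ i ∈ Finset.range (n + 1), (1 - ‖γ i (n + 1)‖ ^ 2) with hP
    have hPone : P = 1 := by
      have hKn1 := hKne (n+1)
      have heq3 : K (e (n+1)) (e (n+1)) * ((P : ℝ) : ℂ) * D = K (e (n+1)) (e (n+1)) * 1 * D := by
        rw [mul_one, ← heq]
        ring
      have h5 := mul_right_cancel₀ hDne heq3
      have h4 : ((P : ℝ) : ℂ) = 1 := mul_left_cancel₀ hKn1 h5
      exact_mod_cast h4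
    have hfle : ∀ j, (1 - ‖γ j (n + 1)‖ ^ 2) ≤ 1 := by
      intro j
      have := sq_nonneg ‖γ j (n+1)‖
      nlinarith
    have hfnn : ∀ j, 0 ≤ (1 - ‖γ j (n + 1)‖ ^ 2) := by
      intro j
      have h1 := hγbd j (n+1)
      nlinarith [norm_nonneg (γ j (n+1))]
    have hmem : i ∈ Finset.range (n+1) := Finset.mem_range.mpr (by omega)
    have hsplit := Finset.mul_prod_erase (Finset.range (n+1))
      (fun j => (1 - ‖γ j (n + 1)‖ ^ 2)) hmem
    have hrest : ∏ j ∈ (Finset.range (n+1)).erase i, (1 - ‖γ j (n + 1)‖ ^ 2) ≤ 1 :=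
      Finset.prod_le_one (fun j _ => hfnn j) (fun j _ => hfle j)
    have hrestnn : 0 ≤ ∏ j ∈ (Finset.range (n+1)).erase i, (1 - ‖γ j (n + 1)‖ ^ 2) :=
      Finset.prod_nonneg (fun j _ => hfnn j)
    have hge : 1 ≤ (1 - ‖γ i (n + 1)‖ ^ 2) := by
      have : P = (1 - ‖γ i (n + 1)‖ ^ 2) *
          ∏ j ∈ (Finset.range (n+1)).erase i, (1 - ‖γ j (n + 1)‖ ^ 2) := hsplit.symm
      nlinarith [hfnn i]
    have hz : ‖γ i (n + 1)‖ ^ 2 = 0 := by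
      have := hfle i
      nlinarith [sq_nonneg ‖γ i (n+1)‖]
    have : ‖γ i (n + 1)‖ = 0 := by
      nlinarith [norm_nonneg (γ i (n+1))]
    exact norm_eq_zero.mp this
  refine ⟨hC1, hC2, ?_, ?_, ?_⟩
  -- (3) the product is constantly one
  · have hconst : (fun N : ℕ => ∏ k ∈ Finset.range (N + 1), (1 - ‖γ 0 k‖ ^ 2))
        = fun _ => (1:ℝ) := by
      funext N
      apply Finset.prod_eq_one
      intro k _
      have hγ0 : γ 0 k = 0 := by
        cases k with
        | zero => exact hγ00
        | succ m => exact hC2 m 0 (Nat.zero_le m)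
      rw [hγ0]
      simp
    rw [hconst]
    exact tendsto_const_nhds
  -- (4) the Szegő integral
  · obtain ⟨hIntlog, hval⟩ := log_int hsph hrot
    have hz : ∀ᵐ ζ ∂σ', ζ 0 ≠ 0 := by
      rw [ae_iff]
      have hset : {ζ : Fin 2 → ℂ | ¬ ζ 0 ≠ 0} = {ζ : Fin 2 → ℂ | ζ 0 = 0} := by
        ext ζ; simp
      rw [hset]
      exact zero_set_null hsph hrot
    have hae2 : ∀ᵐ ζ ∂σ', Real.log (2 * ‖ζ 0‖ ^ 2) = Real.log 2 + Real.log (‖ζ 0‖ ^ 2) := by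
      filter_upwards [hz] with ζ h1
      have hne : ‖ζ 0‖ ^ 2 ≠ 0 := by
        have : ‖ζ 0‖ ≠ 0 := fun h => h1 (norm_eq_zero.mp h)
        positivity
      exact Real.log_mul two_ne_zero hne
    rw [integral_congr_ae hae2, integral_add (integrable_const _) hIntlog, hval,
      integral_const]
    simp only [probReal_univ, smul_eq_mul, one_mul]
    rw [show Real.log 2 + (-1) = Real.log 2 - 1 from by ring, Real.exp_sub,
      Real.exp_log two_pos]
  -- (5) 2/e ≠ 1
  · have he : (2:ℝ) < Real.exp 1 := by
      have := Real.exp_one_gt_d9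
      linarith
    have hlt : 2 / Real.exp 1 < 1 := by
      rw [div_lt_one (Real.exp_pos 1)]
      exact he
    exact ne_of_gt hlt

end
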